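/- Let A be an integral domain and I a nonzero ideal of A. Then A ⋈ I = {(a, a+i) : a ∈ A, i ∈ I} is an elementary divisor ring if and only if A is an elementary divisor ring and I = A. -/

import Mathlib

/-- A commutative ring is an elementary divisor ring if every square matrix is
equivalent to a diagonal matrix via invertible matrices. -/
def IsElementaryDivisorRing (R : Type*) [CommRing R] : Prop :=
  ∀ (n : ℕ) (M : Matrix (Fin n) (Fin n) R),
    ∃ P Q : Matrix (Fin n) (Fin n) R, IsUnit P ∧ IsUnit Q ∧
      ∃ d : Fin n → R, P * M * Q = Matrix.diagonal d

/-- A commutative ring is Hermite if any pair `a, b` can be written `a = a₁d`,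
`b = b₁d` with `Ra₁ + Rb₁ = R`. -/
def IsHermiteRing (R : Type*) [CommRing R] : Prop :=
  ∀ a b : R, ∃ a₁ b₁ d : R, a = a₁ * d ∧ b = b₁ * d ∧ Ideal.span {a₁, b₁} = ⊤

/-- The amalgamation `A ⋈^f J = {(a, f a + j) | a ∈ A, j ∈ J}` as a subring of `A × B`. -/
def amalgamation {A B : Type*} [CommRing A] [CommRing B] (f : A →+* B) (J : Ideal B) :
    Subring (A × B) where
  carrier := {p | p.2 - f p.1 ∈ J}
  mul_mem' := by
    intro p q hp hq
    have h : (p * q).2 - f (p * q).1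
        = p.2 * (q.2 - f q.1) + f q.1 * (p.2 - f p.1) := by
      simp only [Prod.fst_mul, Prod.snd_mul, map_mul]; ring
    show (p * q).2 - f (p * q).1 ∈ J
    rw [h]
    exact J.add_mem (J.mul_mem_left _ hq) (J.mul_mem_left _ hp)
  one_mem' := by simp
  add_mem' := by
    intro p q hp hq
    have h : (p + q).2 - f (p + q).1 = (p.2 - f p.1) + (q.2 - f q.1) := by
      simp only [Prod.fst_add, Prod.snd_add, map_add]; ring
    show (p + q).2 - f (p + q).1 ∈ J
    rw [h]
    exact J.add_mem hp hq
  zero_mem' := by simp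
  neg_mem' := by
    intro p hp
    have h : (-p).2 - f (-p).1 = -(p.2 - f p.1) := by
      simp only [Prod.fst_neg, Prod.snd_neg, map_neg]; ring
    show (-p).2 - f (-p).1 ∈ J
    rw [h]
    exact J.neg_mem hp

/-- The subring `f(A) + J` of `B`. -/
def rangeAddIdeal {A B : Type*} [CommRing A] [CommRing B] (f : A →+* B) (J : Ideal B) :
    Subring B where
  carrier := {b | ∃ a, b - f a ∈ J}
  mul_mem' := by
    rintro b b' ⟨a, ha⟩ ⟨a', ha'⟩
    refine ⟨a * a', ?_⟩
    have h : b * b' - f (a * a') = b * (b' - f a') + f a' * (b - f a) := by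
      simp only [map_mul]; ring
    show b * b' - f (a * a') ∈ J
    rw [h]
    exact J.add_mem (J.mul_mem_left _ ha') (J.mul_mem_left _ ha)
  one_mem' := ⟨1, by simp⟩
  add_mem' := by
    rintro b b' ⟨a, ha⟩ ⟨a', ha'⟩
    refine ⟨a + a', ?_⟩
    have h : b + b' - f (a + a') = (b - f a) + (b' - f a') := by
      simp only [map_add]; ring
    show b + b' - f (a + a') ∈ J
    rw [h]
    exact J.add_mem ha ha'
  zero_mem' := ⟨0, by simp⟩
  neg_mem' := by
    rintro b ⟨a, ha⟩
    refine ⟨-a, ?_⟩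
    have h : -b - f (-a) = -(b - f a) := by simp only [map_neg]; ring
    show -b - f (-a) ∈ J
    rw [h]
    exact J.neg_mem ha


section aux

theorem edr_of_surjective {R S : Type*} [CommRing R] [CommRing S] (f : R →+* S)
    (hf : Function.Surjective f) (h : IsElementaryDivisorRing R) :
    IsElementaryDivisorRing S := by
  intro n M
  choose N hN using fun i j => hf (M i j)
  obtain ⟨P, Q, hP, hQ, d, hd⟩ := h n (Matrix.of N)
  refine ⟨P.map f, Q.map f, ?_, ?_, fun i => f (d i), ?_⟩
  · simpa [RingHom.mapMatrix_apply] using hP.map f.mapMatrix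
  · simpa [RingHom.mapMatrix_apply] using hQ.map f.mapMatrix
  · have hM : M = (Matrix.of N).map f := by ext i j; simp [hN i j]
    rw [hM, ← Matrix.map_mul, ← Matrix.map_mul, hd]
    ext i j
    simp [Matrix.diagonal, Matrix.map_apply]
    split <;> simp

variable {R S : Type*} [CommRing R] [CommRing S] {n : ℕ}

def pairMat (X : Matrix (Fin n) (Fin n) R) (Y : Matrix (Fin n) (Fin n) S) :
    Matrix (Fin n) (Fin n) (R × S) := Matrix.of fun i j => (X i j, Y i j)

theorem pairMat_mul (X₁ Y₁ : Matrix (Fin n) (Fin n) R) (X₂ Y₂ : Matrix (Fin n) (Fin n) S) :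
    pairMat X₁ X₂ * pairMat Y₁ Y₂ = pairMat (X₁ * Y₁) (X₂ * Y₂) := by
  ext i j
  · simp [pairMat, Matrix.mul_apply, Prod.fst_sum]
  · simp [pairMat, Matrix.mul_apply, Prod.snd_sum]

theorem pairMat_one : (pairMat 1 1 : Matrix (Fin n) (Fin n) (R × S)) = 1 := by
  ext i j
  · simp [pairMat, Matrix.one_apply]; split <;> simp
  · simp [pairMat, Matrix.one_apply]; split <;> simp

theorem pairMat_isUnit {X : Matrix (Fin n) (Fin n) R} {Y : Matrix (Fin n) (Fin n) S}
    (hX : IsUnit X) (hY : IsUnit Y) : IsUnit (pairMat X Y) := by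
  obtain ⟨u, rfl⟩ := hX
  obtain ⟨v, rfl⟩ := hY
  exact ⟨⟨pairMat u v, pairMat ↑u⁻¹ ↑v⁻¹,
    by rw [pairMat_mul]; simp [pairMat_one],
    by rw [pairMat_mul]; simp [pairMat_one]⟩, rfl⟩

theorem edr_prod (hR : IsElementaryDivisorRing R) (hS : IsElementaryDivisorRing S) :
    IsElementaryDivisorRing (R × S) := by
  intro n M
  obtain ⟨P₁, Q₁, hP₁, hQ₁, d₁, hd₁⟩ := hR n (M.map Prod.fst)
  obtain ⟨P₂, Q₂, hP₂, hQ₂, d₂, hd₂⟩ := hS n (M.map Prod.snd)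
  refine ⟨pairMat P₁ P₂, pairMat Q₁ Q₂, pairMat_isUnit hP₁ hP₂, pairMat_isUnit hQ₁ hQ₂,
    fun k => (d₁ k, d₂ k), ?_⟩
  have hM : M = pairMat (M.map Prod.fst) (M.map Prod.snd) := by
    ext i j <;> simp [pairMat]
  rw [hM, pairMat_mul, pairMat_mul, hd₁, hd₂]
  ext i j
  · simp [pairMat, Matrix.diagonal]; split <;> simp
  · simp [pairMat, Matrix.diagonal]; split <;> simp

theorem mem_amalgamation {A : Type*} [CommRing A] (I : Ideal A) (p : A × A) :
    p ∈ amalgamation (RingHom.id A) I ↔ p.2 - p.1 ∈ I := Iff.rfl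

set_option maxHeartbeats 1000000 in
theorem ideal_eq_top {A : Type*} [CommRing A] [IsDomain A] (I : Ideal A) (hI : I ≠ ⊥)
    (h : IsElementaryDivisorRing (amalgamation (RingHom.id A) I)) : I = ⊤ := by
  obtain ⟨i, hiI, hi0⟩ := Submodule.exists_mem_ne_zero_of_ne_bot hI
  set R := amalgamation (RingHom.id A) I with hRdef
  have hxm : ((i, 0) : A × A) ∈ R := by
    rw [mem_amalgamation]; simpa using I.neg_mem hiI
  have hym : ((0, i) : A × A) ∈ R := by
    rw [mem_amalgamation]; simpa using hiI
  set x : R := ⟨(i, 0), hxm⟩ with hxdef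
  set y : R := ⟨(0, i), hym⟩ with hydef
  obtain ⟨P, Q, hP, hQ, d, hd⟩ := h 2 (Matrix.of ![![x, y], ![0, 0]])
  obtain ⟨Pu, hPu⟩ := hP
  obtain ⟨Qu, hQu⟩ := hQ
  set P' : Matrix (Fin 2) (Fin 2) R := ↑Pu⁻¹ with hP'def
  set Q' : Matrix (Fin 2) (Fin 2) R := ↑Qu⁻¹ with hQ'def
  set f₁ : R →+* A := (RingHom.fst A A).comp R.subtype with hf₁
  set f₂ : R →+* A := (RingHom.snd A A).comp R.subtype with hf₂
  have hmem : ∀ r : R, f₂ r - f₁ r ∈ I := fun r => r.2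
  have hfx1 : f₁ x = i := rfl
  have hfx2 : f₂ x = 0 := rfl
  have hfy1 : f₁ y = 0 := rfl
  have hfy2 : f₂ y = i := rfl
  -- entry equations
  have E00 : P 0 0 * (x * Q 0 0 + y * Q 1 0) = d 0 := by
    have := congrFun (congrFun hd 0) 0
    simp only [Matrix.of_apply, Matrix.mul_apply, Fin.sum_univ_two, Matrix.cons_val',
      Matrix.cons_val_zero, Matrix.cons_val_one, Matrix.head_cons, Matrix.empty_val',
      Matrix.cons_val_fin_one, Matrix.head_fin_const, Matrix.diagonal_apply_eq] at this
    linear_combination this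
  have E01 : P 0 0 * (x * Q 0 1 + y * Q 1 1) = 0 := by
    have := congrFun (congrFun hd 0) 1
    simp only [Matrix.of_apply, Matrix.mul_apply, Fin.sum_univ_two, Matrix.cons_val',
      Matrix.cons_val_zero, Matrix.cons_val_one, Matrix.head_cons, Matrix.empty_val',
      Matrix.cons_val_fin_one, Matrix.head_fin_const,
      Matrix.diagonal_apply_ne d (show (0 : Fin 2) ≠ 1 by decide)] at this
    linear_combination this
  have E10 : P 1 0 * (x * Q 0 0 + y * Q 1 0) = 0 := by
    have := congrFun (congrFun hd 1) 0
    simp only [Matrix.of_apply, Matrix.mul_apply, Fin.sum_univ_two, Matrix.cons_val',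
      Matrix.cons_val_zero, Matrix.cons_val_one, Matrix.head_cons, Matrix.empty_val',
      Matrix.cons_val_fin_one, Matrix.head_fin_const,
      Matrix.diagonal_apply_ne d (show (1 : Fin 2) ≠ 0 by decide)] at this
    linear_combination this
  have E11 : P 1 0 * (x * Q 0 1 + y * Q 1 1) = d 1 := by
    have := congrFun (congrFun hd 1) 1
    simp only [Matrix.of_apply, Matrix.mul_apply, Fin.sum_univ_two, Matrix.cons_val',
      Matrix.cons_val_zero, Matrix.cons_val_one, Matrix.head_cons, Matrix.empty_val',
      Matrix.cons_val_fin_one, Matrix.head_fin_const, Matrix.diagonal_apply_eq] at this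
    linear_combination this
  -- inverse equation
  have hMinv : (Matrix.of ![![x, y], ![0, 0]] : Matrix (Fin 2) (Fin 2) R)
      = P' * Matrix.diagonal d * Q' := by
    rw [← hd, ← hPu, ← hQu, hP'def, hQ'def]
    simp [mul_assoc, -Matrix.coe_units_inv]
  have hxeq : x = P' 0 0 * d 0 * Q' 0 0 + P' 0 1 * d 1 * Q' 1 0 := by
    have := congrFun (congrFun hMinv 0) 0
    simp only [Matrix.of_apply, Matrix.mul_apply, Fin.sum_univ_two, Matrix.cons_val',
      Matrix.cons_val_zero, Matrix.cons_val_one, Matrix.head_cons, Matrix.empty_val',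
      Matrix.cons_val_fin_one, Matrix.head_fin_const, Matrix.diagonal_apply_eq,
      Matrix.diagonal_apply_ne d (show (0 : Fin 2) ≠ 1 by decide),
      Matrix.diagonal_apply_ne d (show (1 : Fin 2) ≠ 0 by decide)] at this
    linear_combination this
  have hyeq : y = P' 0 0 * d 0 * Q' 0 1 + P' 0 1 * d 1 * Q' 1 1 := by
    have := congrFun (congrFun hMinv 0) 1
    simp only [Matrix.of_apply, Matrix.mul_apply, Fin.sum_univ_two, Matrix.cons_val',
      Matrix.cons_val_zero, Matrix.cons_val_one, Matrix.head_cons, Matrix.empty_val',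
      Matrix.cons_val_fin_one, Matrix.head_fin_const, Matrix.diagonal_apply_eq,
      Matrix.diagonal_apply_ne d (show (0 : Fin 2) ≠ 1 by decide),
      Matrix.diagonal_apply_ne d (show (1 : Fin 2) ≠ 0 by decide)] at this
    linear_combination this
  -- scalar equations in A
  have h1 : f₁ (P 0 0) * f₁ (Q 0 1) = 0 := by
    have := congrArg f₁ E01
    simp only [map_mul, map_add, map_zero, hfx1, hfy1] at this
    apply mul_left_cancel₀ hi0
    linear_combination this
  have h2 : f₂ (P 0 0) * f₂ (Q 1 1) = 0 := by
    have := congrArg f₂ E01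
    simp only [map_mul, map_add, map_zero, hfx2, hfy2] at this
    apply mul_left_cancel₀ hi0
    linear_combination this
  have h3 : f₁ (P 1 0) * f₁ (Q 0 0) = 0 := by
    have := congrArg f₁ E10
    simp only [map_mul, map_add, map_zero, hfx1, hfy1] at this
    apply mul_left_cancel₀ hi0
    linear_combination this
  have h4 : f₂ (P 1 0) * f₂ (Q 1 0) = 0 := by
    have := congrArg f₂ E10
    simp only [map_mul, map_add, map_zero, hfx2, hfy2] at this
    apply mul_left_cancel₀ hi0
    linear_combination this
  have hd01 : f₁ (d 0) = f₁ (P 0 0) * (i * f₁ (Q 0 0)) := by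
    have := congrArg f₁ E00
    simp only [map_mul, map_add, map_zero, hfx1, hfy1] at this
    linear_combination -this
  have hd02 : f₂ (d 0) = f₂ (P 0 0) * (i * f₂ (Q 1 0)) := by
    have := congrArg f₂ E00
    simp only [map_mul, map_add, map_zero, hfx2, hfy2] at this
    linear_combination -this
  have hd11 : f₁ (d 1) = f₁ (P 1 0) * (i * f₁ (Q 0 1)) := by
    have := congrArg f₁ E11
    simp only [map_mul, map_add, map_zero, hfx1, hfy1] at this
    linear_combination -this
  have hd12 : f₂ (d 1) = f₂ (P 1 0) * (i * f₂ (Q 1 1)) := by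
    have := congrArg f₂ E11
    simp only [map_mul, map_add, map_zero, hfx2, hfy2] at this
    linear_combination -this
  have h5 : 1 = f₁ (P' 0 0) * f₁ (Q' 0 0) * (f₁ (P 0 0) * f₁ (Q 0 0))
      + f₁ (P' 0 1) * f₁ (Q' 1 0) * (f₁ (P 1 0) * f₁ (Q 0 1)) := by
    have := congrArg f₁ hxeq
    simp only [map_mul, map_add, hfx1] at this
    rw [hd01, hd11] at this
    apply mul_left_cancel₀ hi0
    linear_combination this
  have h8 : 1 = f₂ (P' 0 0) * f₂ (Q' 0 1) * (f₂ (P 0 0) * f₂ (Q 1 0))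
      + f₂ (P' 0 1) * f₂ (Q' 1 1) * (f₂ (P 1 0) * f₂ (Q 1 1)) := by
    have := congrArg f₂ hyeq
    simp only [map_mul, map_add, hfy2] at this
    rw [hd02, hd12] at this
    apply mul_left_cancel₀ hi0
    linear_combination this
  have hdetQ : IsUnit Q.det := (Matrix.isUnit_iff_isUnit_det Q).mp ⟨Qu, hQu⟩
  -- case analysis
  rcases mul_eq_zero.mp h3 with hρ | ha
  · -- f₁ (P 1 0) = 0
    have hρ'I : f₂ (P 1 0) ∈ I := by simpa [hρ] using hmem (P 1 0)
    rcases mul_eq_zero.mp h2 with hπ' | hb'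
    · -- f₂ (P 0 0) = 0
      refine Ideal.eq_top_of_isUnit_mem I hρ'I (IsUnit.of_mul_eq_one (a := _)
        (f₂ (P' 0 1) * f₂ (Q' 1 1) * f₂ (Q 1 1)) ?_)
      linear_combination -h8 - f₂ (P' 0 0) * f₂ (Q' 0 1) * f₂ (Q 1 0) * hπ'
    · -- f₂ (Q 1 1) = 0
      have hπ : f₁ (P 0 0) ≠ 0 := by
        intro h0; rw [h0, hρ] at h5; simp at h5
      have ha' : f₁ (Q 0 1) = 0 := by
        rcases mul_eq_zero.mp h1 with h' | h'
        · exact absurd h' hπ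
        · exact h'
      have hdet2 : IsUnit (f₂ (Q 0 0) * f₂ (Q 1 1) - f₂ (Q 0 1) * f₂ (Q 1 0)) := by
        have := hdetQ.map f₂
        rwa [Matrix.det_fin_two, map_sub, map_mul, map_mul] at this
      obtain ⟨v, hv⟩ := isUnit_iff_exists_inv.mp hdet2
      have hU : IsUnit (f₂ (Q 0 1)) := IsUnit.of_mul_eq_one (a := _) (-(f₂ (Q 1 0) * v))
        (by linear_combination hv - f₂ (Q 0 0) * v * hb')
      have hmemI : f₂ (Q 0 1) ∈ I := by simpa [ha'] using hmem (Q 0 1)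
      exact Ideal.eq_top_of_isUnit_mem I hmemI hU
  · -- f₁ (Q 0 0) = 0
    have ha' : f₁ (Q 0 1) ≠ 0 := by
      intro h0; rw [ha, h0] at h5; simp at h5
    have hπ : f₁ (P 0 0) = 0 := by
      rcases mul_eq_zero.mp h1 with h' | h'
      · exact h'
      · exact absurd h' ha'
    have hπ'I : f₂ (P 0 0) ∈ I := by simpa [hπ] using hmem (P 0 0)
    rcases mul_eq_zero.mp h2 with hπ' | hb'
    · -- f₂ (P 0 0) = 0
      have hρ' : f₂ (P 1 0) ≠ 0 := by
        intro h0; rw [hπ', h0] at h8; simp at h8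
      have hb : f₂ (Q 1 0) = 0 := by
        rcases mul_eq_zero.mp h4 with h' | h'
        · exact absurd h' hρ'
        · exact h'
      have hdet1 : IsUnit (f₁ (Q 0 0) * f₁ (Q 1 1) - f₁ (Q 0 1) * f₁ (Q 1 0)) := by
        have := hdetQ.map f₁
        rwa [Matrix.det_fin_two, map_sub, map_mul, map_mul] at this
      obtain ⟨v, hv⟩ := isUnit_iff_exists_inv.mp hdet1
      have hU : IsUnit (f₁ (Q 1 0)) := IsUnit.of_mul_eq_one (a := _) (-(f₁ (Q 0 1) * v))
        (by linear_combination hv - f₁ (Q 1 1) * v * ha)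
      have hmemI : f₁ (Q 1 0) ∈ I := by
        have := hmem (Q 1 0)
        rw [hb] at this
        simpa using I.neg_mem this
      exact Ideal.eq_top_of_isUnit_mem I hmemI hU
    · -- f₂ (Q 1 1) = 0
      refine Ideal.eq_top_of_isUnit_mem I hπ'I (IsUnit.of_mul_eq_one (a := _)
        (f₂ (P' 0 0) * f₂ (Q' 0 1) * f₂ (Q 1 0)) ?_)
      linear_combination -h8 - f₂ (P' 0 1) * f₂ (Q' 1 1) * f₂ (P 1 0) * hb'

end aux

theorem stmt13 {A : Type*} [CommRing A] [IsDomain A] (I : Ideal A) (hI : I ≠ ⊥) :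
    IsElementaryDivisorRing (amalgamation (RingHom.id A) I) ↔
      IsElementaryDivisorRing A ∧ I = ⊤ := by
  constructor
  · intro h
    have hItop : I = ⊤ := ideal_eq_top I hI h
    refine ⟨?_, hItop⟩
    refine edr_of_surjective ((RingHom.fst A A).comp (amalgamation (RingHom.id A) I).subtype)
      (fun a => ⟨⟨(a, a), by simp [mem_amalgamation]⟩, rfl⟩) h
  · rintro ⟨hA, rfl⟩
    have htop : amalgamation (RingHom.id A) (⊤ : Ideal A) = ⊤ := by
      ext p; simp [mem_amalgamation]
    have e : (amalgamation (RingHom.id A) (⊤ : Ideal A)) ≃+* A × A :=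
      (RingEquiv.subringCongr htop).trans Subring.topEquiv
    exact edr_of_surjective e.symm.toRingHom e.symm.surjective (edr_prod hA hA)
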